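/- Let A, Â ∈ ℝ^{n×n} be symmetric matrices with 0 ⪯ Â ⪯ A, and set P̂ := Â + I and M̂ := P̂^{-1/2}(A+I)P̂^{-1/2}. Then ‖log(M̂)‖_F² ≤ ( trace(log(A+I)) − trace(log(P̂)) ) · log(1 + ‖A − Â‖₂). -/

import Mathlib

open MeasureTheory ProbabilityTheory Matrix

/-- Matrix logarithm of a real symmetric matrix, obtained by applying the real logarithm
to the eigenvalues in a spectral decomposition. -/
noncomputable def matLog {n : ℕ} (B : Matrix (Fin n) (Fin n) ℝ) : Matrix (Fin n) (Fin n) ℝ :=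
  if hB : B.IsHermitian then
    (hB.eigenvectorUnitary : Matrix (Fin n) (Fin n) ℝ) *
      Matrix.diagonal (fun i => Real.log (hB.eigenvalues i)) *
      (star (hB.eigenvectorUnitary : Matrix (Fin n) (Fin n) ℝ))
  else 0

open scoped Classical in
/-- `B^{-1/2}`: the inverse of the unique positive semidefinite square root of a
positive semidefinite matrix `B`. -/
noncomputable def invSqrt {n : ℕ} (B : Matrix (Fin n) (Fin n) ℝ) : Matrix (Fin n) (Fin n) ℝ :=
  if hB : B.PosSemidef then
    ((hB.1.eigenvectorUnitary : Matrix (Fin n) (Fin n) ℝ) *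
      Matrix.diagonal (fun i => Real.sqrt (hB.1.eigenvalues i)) *
      (star (hB.1.eigenvectorUnitary : Matrix (Fin n) (Fin n) ℝ)))⁻¹ else 0

/-- Squared Frobenius norm of a matrix. -/
noncomputable def frobSq {m n : ℕ} (H : Matrix (Fin m) (Fin n) ℝ) : ℝ :=
  ∑ i, ∑ j, (H i j) ^ 2

/-- Singular values of a matrix (square roots of the eigenvalues of `HᴴH`). -/
noncomputable def singVals {m n : ℕ} (H : Matrix (Fin m) (Fin n) ℝ) : Fin n → ℝ :=
  fun i => Real.sqrt ((show (Hᵀ * H).IsHermitian by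
    simpa [Matrix.conjTranspose_eq_transpose_of_trivial] using
      Matrix.isHermitian_conjTranspose_mul_self H).eigenvalues i)

/-- Nuclear norm: sum of the singular values. -/
noncomputable def nuclearNorm {m n : ℕ} (H : Matrix (Fin m) (Fin n) ℝ) : ℝ :=
  ∑ i, singVals H i

/-- Spectral norm: largest singular value. -/
noncomputable def specNorm {m n : ℕ} (H : Matrix (Fin m) (Fin n) ℝ) : ℝ :=
  ⨆ i, singVals H i

-- Rayleigh-type upper bound
lemma rayleigh_le {n : ℕ} (H : Matrix (Fin n) (Fin n) ℝ) (hH : H.IsHermitian) (c : ℝ)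
    (hc : ∀ i, hH.eigenvalues i ≤ c) (x : Fin n → ℝ) :
    x ⬝ᵥ (H *ᵥ x) ≤ c * (x ⬝ᵥ x) := by
  set U : Matrix (Fin n) (Fin n) ℝ := (hH.eigenvectorUnitary : Matrix (Fin n) (Fin n) ℝ) with hU
  have hU1 : star U * U = 1 := mem_unitaryGroup_iff'.mp hH.eigenvectorUnitary.2
  have hU2 : U * star U = 1 := mem_unitaryGroup_iff.mp hH.eigenvectorUnitary.2
  set y := star U *ᵥ x with hy
  have hsU : star U = Uᵀ := by
    rw [Matrix.star_eq_conjTranspose, Matrix.conjTranspose_eq_transpose_of_trivial]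
  have hdot : ∀ w : Fin n → ℝ, x ⬝ᵥ (U *ᵥ w) = y ⬝ᵥ w := by
    intro w
    rw [Matrix.dotProduct_mulVec, hy, hsU, Matrix.mulVec_transpose]
  have hx : H *ᵥ x = U *ᵥ (diagonal hH.eigenvalues *ᵥ y) := by
    conv_lhs => rw [hH.spectral_theorem]
    simp only [← Matrix.mulVec_mulVec, hy]
    norm_num [RCLike.ofReal]
    rw [Matrix.mul_assoc]
  have h1 : x ⬝ᵥ (H *ᵥ x) = ∑ i, hH.eigenvalues i * (y i)^2 := by
    rw [hx, hdot]
    simp only [dotProduct, Matrix.mulVec_diagonal, sq]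
    exact Finset.sum_congr rfl fun i _ => by ring
  have h2 : x ⬝ᵥ x = ∑ i, (y i)^2 := by
    have h3 : x ⬝ᵥ x = y ⬝ᵥ y := by
      rw [← hdot y, hy, Matrix.mulVec_mulVec, hU2, Matrix.one_mulVec]
    rw [h3]
    simp only [dotProduct, sq]
  rw [h1, h2, Finset.mul_sum]
  exact Finset.sum_le_sum fun i _ => mul_le_mul_of_nonneg_right (hc i) (sq_nonneg _)

lemma singVals_le_specNorm {m n : ℕ} (H : Matrix (Fin m) (Fin n) ℝ) (i : Fin n) :
    singVals H i ≤ specNorm H :=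
  le_ciSup (Set.Finite.bddAbove (Set.finite_range _)) i

lemma specNorm_nonneg {m n : ℕ} (H : Matrix (Fin m) (Fin n) ℝ) : 0 ≤ specNorm H := by
  rcases n with _ | n
  · simp [specNorm, ciSup_of_empty, Real.sSup_empty]
  · exact le_trans (Real.sqrt_nonneg _) (singVals_le_specNorm H 0)

lemma quad_le_specNorm {n : ℕ} (E : Matrix (Fin n) (Fin n) ℝ) (hE : E.PosSemidef)
    (x : Fin n → ℝ) : x ⬝ᵥ (E *ᵥ x) ≤ specNorm E * (x ⬝ᵥ x) := by
  have hs := specNorm_nonneg E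
  have hxx : (0:ℝ) ≤ x ⬝ᵥ x := by
    simpa [dotProduct] using Finset.sum_nonneg fun i _ => mul_self_nonneg (x i)
  have hEx : (0:ℝ) ≤ x ⬝ᵥ (E *ᵥ x) := by simpa using hE.dotProduct_mulVec_nonneg x
  have hray : (E *ᵥ x) ⬝ᵥ (E *ᵥ x) ≤ specNorm E ^ 2 * (x ⬝ᵥ x) := by
    have h4 : (E *ᵥ x) ⬝ᵥ (E *ᵥ x) = x ⬝ᵥ ((Eᴴ * E) *ᵥ x) := by
      rw [← Matrix.mulVec_mulVec, Matrix.dotProduct_mulVec x,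
        Matrix.conjTranspose_eq_transpose_of_trivial, Matrix.vecMul_transpose]
    rw [h4]
    have hEH : (Eᵀ * E).IsHermitian := by
      simpa [Matrix.conjTranspose_eq_transpose_of_trivial] using
        Matrix.isHermitian_conjTranspose_mul_self E
    refine rayleigh_le _ hEH _ (fun i => ?_) x
    have h5 : (0:ℝ) ≤ hEH.eigenvalues i :=
      Matrix.eigenvalues_conjTranspose_mul_self_nonneg E i
    calc hEH.eigenvalues i
        = (singVals E i) ^ 2 := by rw [singVals, Real.sq_sqrt h5]
      _ ≤ specNorm E ^ 2 := by
          exact pow_le_pow_left₀ (Real.sqrt_nonneg _) (singVals_le_specNorm E i) 2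
  have hcs : (x ⬝ᵥ (E *ᵥ x)) ^ 2 ≤ (x ⬝ᵥ x) * ((E *ᵥ x) ⬝ᵥ (E *ᵥ x)) := by
    have := Finset.sum_mul_sq_le_sq_mul_sq Finset.univ x (E *ᵥ x)
    simpa [dotProduct, sq] using this
  have h6 : (x ⬝ᵥ (E *ᵥ x)) ^ 2 ≤ (specNorm E * (x ⬝ᵥ x)) ^ 2 := by
    calc (x ⬝ᵥ (E *ᵥ x)) ^ 2 ≤ (x ⬝ᵥ x) * ((E *ᵥ x) ⬝ᵥ (E *ᵥ x)) := hcs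
      _ ≤ (x ⬝ᵥ x) * (specNorm E ^ 2 * (x ⬝ᵥ x)) := mul_le_mul_of_nonneg_left hray hxx
      _ = (specNorm E * (x ⬝ᵥ x)) ^ 2 := by ring
  exact (pow_le_pow_iff_left₀ hEx (by positivity) two_ne_zero).mp h6

lemma frobSq_eq_trace {n : ℕ} (H : Matrix (Fin n) (Fin n) ℝ) : frobSq H = (Hᵀ * H).trace := by
  simp only [frobSq, Matrix.trace, Matrix.diag, Matrix.mul_apply, Matrix.transpose_apply, sq]
  exact Finset.sum_comm

lemma matLog_eq {n : ℕ} {B : Matrix (Fin n) (Fin n) ℝ} (hB : B.IsHermitian) :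
    matLog B = (hB.eigenvectorUnitary : Matrix (Fin n) (Fin n) ℝ) *
      Matrix.diagonal (fun i => Real.log (hB.eigenvalues i)) *
      (star (hB.eigenvectorUnitary : Matrix (Fin n) (Fin n) ℝ)) := by
  rw [matLog, dif_pos hB]

lemma trace_matLog {n : ℕ} {B : Matrix (Fin n) (Fin n) ℝ} (hB : B.IsHermitian) :
    (matLog B).trace = ∑ i, Real.log (hB.eigenvalues i) := by
  rw [matLog_eq hB, Matrix.trace_mul_comm, ← Matrix.mul_assoc,
    mem_unitaryGroup_iff'.mp hB.eigenvectorUnitary.2, Matrix.one_mul, Matrix.trace_diagonal]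

lemma frobSq_matLog {n : ℕ} {B : Matrix (Fin n) (Fin n) ℝ} (hB : B.IsHermitian) :
    frobSq (matLog B) = ∑ i, (Real.log (hB.eigenvalues i)) ^ 2 := by
  set U : Matrix (Fin n) (Fin n) ℝ := (hB.eigenvectorUnitary : Matrix (Fin n) (Fin n) ℝ) with hU
  have hU1 : star U * U = 1 := mem_unitaryGroup_iff'.mp hB.eigenvectorUnitary.2
  have hsU : star U = Uᵀ := by
    rw [Matrix.star_eq_conjTranspose, Matrix.conjTranspose_eq_transpose_of_trivial]
  set D := Matrix.diagonal (fun i => Real.log (hB.eigenvalues i)) with hD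
  have hT : (matLog B)ᵀ = matLog B := by
    rw [matLog_eq hB, ← hU, ← hD, Matrix.transpose_mul, Matrix.transpose_mul, hsU,
      Matrix.transpose_transpose, Matrix.diagonal_transpose, Matrix.mul_assoc]
  rw [frobSq_eq_trace, hT, matLog_eq hB, ← hU, ← hD]
  have : U * D * star U * (U * D * star U) = U * (D * D) * star U := by
    calc U * D * star U * (U * D * star U) = U * (D * ((star U * U) * (D * star U))) := by
          simp only [Matrix.mul_assoc]
      _ = U * (D * D) * star U := by rw [hU1, Matrix.one_mul]; simp only [Matrix.mul_assoc]
  rw [this, Matrix.trace_mul_comm, ← Matrix.mul_assoc, hU1, Matrix.one_mul, hD,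
    Matrix.diagonal_mul_diagonal, Matrix.trace_diagonal]
  simp [sq]

/-- Eigenvalues of a symmetric matrix, sorted in decreasing order
(`eigDesc B i` is the `i`-th largest eigenvalue). -/
noncomputable def eigDesc {n : ℕ} (B : Matrix (Fin n) (Fin n) ℝ) : Fin n → ℝ :=
  if hB : B.IsHermitian then
    fun i => (hB.eigenvalues ∘ Tuple.sort hB.eigenvalues) i.rev
  else 0

/-- Law of a standard Gaussian random vector in `ℝⁿ` (i.i.d. `gaussianReal 0 1` entries). -/
noncomputable def stdGaussian (n : ℕ) : Measure (Fin n → ℝ) :=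
  Measure.pi fun _ => gaussianReal 0 1

/-- Law of a random `n × ℓ` matrix with i.i.d. standard Gaussian entries. -/
noncomputable def stdGaussianMatrix (n ℓ : ℕ) : Measure (Fin n → Fin ℓ → ℝ) :=
  Measure.pi fun _ => Measure.pi fun _ => gaussianReal 0 1

/-- The truncated-spectral-decomposition preconditioner `P_r = A_r + I`, where
`A_r = U_r Λ_r U_rᵀ` keeps the `r` leading eigenvalues. -/
noncomputable def truncP {n : ℕ} (U : Matrix (Fin n) (Fin n) ℝ) (lam : Fin n → ℝ) (r : ℕ) :
    Matrix (Fin n) (Fin n) ℝ :=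
  U * Matrix.diagonal (fun i : Fin n => if (i : ℕ) < r then lam i else 0) * Uᵀ + 1

/-- The idealized preconditioned matrix `M_r = P_r^{-1/2} (A + I) P_r^{-1/2}`. -/
noncomputable def truncM {n : ℕ} (A U : Matrix (Fin n) (Fin n) ℝ) (lam : Fin n → ℝ) (r : ℕ) :
    Matrix (Fin n) (Fin n) ℝ :=
  invSqrt (truncP U lam r) * (A + 1) * invSqrt (truncP U lam r)

/-- The Nyström approximation `Â = AΩ(ΩᵀAΩ)⁻¹ΩᵀA`. -/
noncomputable def nystrom {n ℓ : ℕ} (A : Matrix (Fin n) (Fin n) ℝ)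
    (Ω : Matrix (Fin n) (Fin ℓ) ℝ) : Matrix (Fin n) (Fin n) ℝ :=
  A * Ω * (Ωᵀ * A * Ω)⁻¹ * Ωᵀ * A

/-- The Nyström-preconditioned matrix `M̂ = P̂^{-1/2} (A + I) P̂^{-1/2}` with `P̂ = Â + I`. -/
noncomputable def nysPrec {n ℓ : ℕ} (A : Matrix (Fin n) (Fin n) ℝ)
    (Ω : Matrix (Fin n) (Fin ℓ) ℝ) : Matrix (Fin n) (Fin n) ℝ :=
  invSqrt (nystrom A Ω + 1) * (A + 1) * invSqrt (nystrom A Ω + 1)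

theorem stmt13 {n : ℕ} (A Ahat : Matrix (Fin n) (Fin n) ℝ) (hAs : A.IsSymm) (hAhs : Ahat.IsSymm)
    (hpsd : Ahat.PosSemidef) (hle : (A - Ahat).PosSemidef) :
    frobSq (matLog (invSqrt (Ahat + 1) * (A + 1) * invSqrt (Ahat + 1)))
      ≤ ((matLog (A + 1)).trace - (matLog (Ahat + 1)).trace)
          * Real.log (1 + specNorm (A - Ahat)) := by
  classical
  set P : Matrix (Fin n) (Fin n) ℝ := Ahat + 1 with hPdef
  have hP : P.PosDef := Matrix.PosDef.posSemidef_add hpsd Matrix.PosDef.one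
  have hPsd : P.PosSemidef := hP.posSemidef
  set U : Matrix (Fin n) (Fin n) ℝ := (hPsd.1.eigenvectorUnitary : Matrix (Fin n) (Fin n) ℝ)
    with hUdef
  set R : Matrix (Fin n) (Fin n) ℝ :=
    U * Matrix.diagonal (fun i => Real.sqrt (hPsd.1.eigenvalues i)) * star U with hRdef
  have hR : R.IsHermitian := by
    have h := Matrix.isHermitian_mul_mul_conjTranspose U
      (Matrix.isHermitian_diagonal (fun i => Real.sqrt (hPsd.1.eigenvalues i)))
    rwa [← Matrix.star_eq_conjTranspose] at h
  have hRR : R * R = P := by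
    have hU1 : star U * U = 1 := mem_unitaryGroup_iff'.mp hPsd.1.eigenvectorUnitary.2
    have hd : (fun i => Real.sqrt (hPsd.1.eigenvalues i) * Real.sqrt (hPsd.1.eigenvalues i))
        = (RCLike.ofReal ∘ hPsd.1.eigenvalues) := by
      funext i; simp [Real.mul_self_sqrt (hPsd.eigenvalues_nonneg i)]
    calc R * R = U * (Matrix.diagonal (fun i => Real.sqrt (hPsd.1.eigenvalues i)) *
          Matrix.diagonal (fun i => Real.sqrt (hPsd.1.eigenvalues i))) * star U := by
          rw [hRdef]; simp only [Matrix.mul_assoc]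
          rw [← Matrix.mul_assoc (star U) U, hU1, Matrix.one_mul]
      _ = P := by
          rw [Matrix.diagonal_mul_diagonal, hd]
          conv_rhs => rw [hPsd.1.spectral_theorem, Unitary.conjStarAlgAut_apply]
  have hdetP : 0 < P.det := hP.det_pos
  have hdetRR : R.det * R.det = P.det := by rw [← Matrix.det_mul, hRR]
  have hdetR : R.det ≠ 0 := by
    intro h; rw [h, mul_zero] at hdetRR; exact hdetP.ne hdetRR
  set S : Matrix (Fin n) (Fin n) ℝ := R⁻¹ with hSdef2
  have hSdef : invSqrt (Ahat + 1) = S := by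
    rw [invSqrt, dif_pos hPsd]
  have hRS : R * S = 1 := Matrix.mul_nonsing_inv R hdetR.isUnit
  have hSR : S * R = 1 := Matrix.nonsing_inv_mul R hdetR.isUnit
  have hSH : S.IsHermitian := hR.inv
  have hST : Sᵀ = S := by
    rw [← Matrix.conjTranspose_eq_transpose_of_trivial, hSH.eq]
  have hSPS : S * P * S = 1 := by
    rw [← hRR, ← Matrix.mul_assoc S R R, hSR, Matrix.one_mul, hRS]
  have hA1 : (A + 1).PosDef := by
    have h := Matrix.PosDef.posSemidef_add hle hP
    have e : A - Ahat + P = A + 1 := by rw [hPdef]; abel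
    rwa [e] at h
  set M : Matrix (Fin n) (Fin n) ℝ := S * (A + 1) * S with hMdef
  have hMH : M.IsHermitian := by
    have h := Matrix.isHermitian_conjTranspose_mul_mul S hA1.1
    rwa [hSH.eq] at h
  -- dot product helper through S
  have hdotS : ∀ v z : Fin n → ℝ, v ⬝ᵥ (S *ᵥ z) = (S *ᵥ v) ⬝ᵥ z := by
    intro v z
    rw [Matrix.dotProduct_mulVec, ← Matrix.mulVec_transpose, hST]
  -- M - 1 = S * (A - Ahat) * S
  have hkey : M - 1 = S * (A - Ahat) * S := by
    calc M - 1 = S * (A + 1) * S - S * P * S := by rw [hSPS]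
      _ = S * ((A + 1) - P) * S := by
          rw [← Matrix.sub_mul, ← Matrix.mul_sub]
      _ = S * (A - Ahat) * S := by
          congr 2; rw [hPdef]; abel
  have hM1 : (M - 1).PosSemidef := by
    rw [hkey]
    have h := hle.conjTranspose_mul_mul_same S
    rwa [hSH.eq] at h
  have hSAS : (1 : Matrix (Fin n) (Fin n) ℝ) - S * S = S * Ahat * S := by
    have expand : S * P * S = S * Ahat * S + S * S := by
      rw [hPdef, Matrix.mul_add, Matrix.add_mul, Matrix.mul_one]
    rw [← hSPS, expand]; abel
  have hs0 : 0 ≤ specNorm (A - Ahat) := specNorm_nonneg _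
  -- eigenvalue bounds
  have hv1s : ∀ i : Fin n,
      (⇑(hMH.eigenvectorBasis i) ⬝ᵥ ⇑(hMH.eigenvectorBasis i)) = 1 := by
    intro i
    have hnorm := hMH.eigenvectorBasis.orthonormal.1 i
    have h2 : (inner ℝ (hMH.eigenvectorBasis i) (hMH.eigenvectorBasis i) : ℝ) = 1 := by
      rw [real_inner_self_eq_norm_sq, hnorm]; norm_num
    rw [← h2, PiLp.inner_apply]
    simp only [dotProduct, RCLike.inner_apply, conj_trivial, mul_comm]
  have hvfacts : ∀ i : Fin n,
      (⇑(hMH.eigenvectorBasis i) ⬝ᵥ ⇑(hMH.eigenvectorBasis i)) = 1 ∧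
      hMH.eigenvalues i = ⇑(hMH.eigenvectorBasis i) ⬝ᵥ (M *ᵥ ⇑(hMH.eigenvectorBasis i)) := by
    intro i
    refine ⟨hv1s i, ?_⟩
    rw [hMH.mulVec_eigenvectorBasis, dotProduct_smul, smul_eq_mul, hv1s i, mul_one]
  have hlow : ∀ i, 1 ≤ hMH.eigenvalues i := by
    intro i
    obtain ⟨hv1, hμ⟩ := hvfacts i
    set v := ⇑(hMH.eigenvectorBasis i)
    have h := hM1.dotProduct_mulVec_nonneg v
    simp only [star_trivial, Matrix.sub_mulVec, Matrix.one_mulVec, dotProduct_sub] at h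
    rw [hv1] at h
    rw [hμ]; linarith
  have hup : ∀ i, hMH.eigenvalues i ≤ 1 + specNorm (A - Ahat) := by
    intro i
    obtain ⟨hv1, hμ⟩ := hvfacts i
    set v := ⇑(hMH.eigenvectorBasis i) with hv
    set w := S *ᵥ v with hw
    have hquad : v ⬝ᵥ ((M - 1) *ᵥ v) = w ⬝ᵥ ((A - Ahat) *ᵥ w) := by
      rw [hkey, ← Matrix.mulVec_mulVec, ← Matrix.mulVec_mulVec, hdotS, hw]
    have hww : w ⬝ᵥ w ≤ 1 := by
      have h1 : w ⬝ᵥ w = v ⬝ᵥ ((S * S) *ᵥ v) := by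
        rw [← Matrix.mulVec_mulVec, hdotS, hw]
        exact dotProduct_comm _ _
      have h2 : v ⬝ᵥ ((1 - S * S) *ᵥ v) = (S *ᵥ v) ⬝ᵥ (Ahat *ᵥ (S *ᵥ v)) := by
        rw [hSAS, ← Matrix.mulVec_mulVec, ← Matrix.mulVec_mulVec, hdotS]
      have h3 : 0 ≤ (S *ᵥ v) ⬝ᵥ (Ahat *ᵥ (S *ᵥ v)) := by simpa using hpsd.dotProduct_mulVec_nonneg (S *ᵥ v)
      rw [← h2] at h3
      simp only [Matrix.sub_mulVec, Matrix.one_mulVec, dotProduct_sub] at h3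
      rw [hv1] at h3
      rw [h1]; linarith
    have hEbound : w ⬝ᵥ ((A - Ahat) *ᵥ w) ≤ specNorm (A - Ahat) * (w ⬝ᵥ w) :=
      quad_le_specNorm _ hle w
    have hlhs : v ⬝ᵥ ((M - 1) *ᵥ v) = hMH.eigenvalues i - 1 := by
      simp only [Matrix.sub_mulVec, Matrix.one_mulVec, dotProduct_sub]
      rw [hv1, ← hμ]
    have : hMH.eigenvalues i - 1 ≤ specNorm (A - Ahat) * 1 := by
      rw [← hlhs, hquad]
      exact hEbound.trans (mul_le_mul_of_nonneg_left hww hs0)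
    linarith
  -- trace identity
  have hμpos : ∀ i, (0:ℝ) < hMH.eigenvalues i := fun i => lt_of_lt_of_le one_pos (hlow i)
  have hdetM : M.det = (A + 1).det * (S.det * S.det) := by
    rw [hMdef, Matrix.det_mul, Matrix.det_mul]; ring
  have hdetSS : S.det * S.det * P.det = 1 := by
    have := congrArg Matrix.det hSPS
    rw [Matrix.det_mul, Matrix.det_mul, Matrix.det_one] at this
    rw [← this]; ring
  have hdetA1 : 0 < (A + 1).det := hA1.det_pos
  have hdetSS' : S.det * S.det = P.det⁻¹ := by
    field_simp at hdetSS ⊢; linarith [hdetSS]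
  have hlogdetM : ∑ i, Real.log (hMH.eigenvalues i)
      = Real.log ((A + 1).det) - Real.log (P.det) := by
    have h1 : M.det = ∏ i, hMH.eigenvalues i := by
      simpa using hMH.det_eq_prod_eigenvalues
    have h2 : Real.log M.det = ∑ i, Real.log (hMH.eigenvalues i) := by
      rw [h1, Real.log_prod]
      exact fun i _ => (hμpos i).ne'
    rw [← h2, hdetM, hdetSS', Real.log_mul hdetA1.ne' (by positivity),
      Real.log_inv]
    ring
  have htraceA1 : (matLog (A + 1)).trace = Real.log ((A + 1).det) := by
    rw [trace_matLog hA1.1]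
    have h1 : (A + 1).det = ∏ i, hA1.1.eigenvalues i := by
      simpa using hA1.1.det_eq_prod_eigenvalues
    rw [h1, Real.log_prod]
    exact fun i _ => (hA1.eigenvalues_pos i).ne'
  have htraceP : (matLog (Ahat + 1)).trace = Real.log (P.det) := by
    rw [← hPdef, trace_matLog hP.1]
    have h1 : P.det = ∏ i, hP.1.eigenvalues i := by
      simpa using hP.1.det_eq_prod_eigenvalues
    rw [h1, Real.log_prod]
    exact fun i _ => (hP.eigenvalues_pos i).ne'
  -- final assembly
  rw [hSdef, ← hMdef, frobSq_matLog hMH, htraceA1, htraceP, ← hlogdetM, Finset.sum_mul]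
  refine Finset.sum_le_sum fun i _ => ?_
  have hl0 : 0 ≤ Real.log (hMH.eigenvalues i) := Real.log_nonneg (hlow i)
  have hl1 : Real.log (hMH.eigenvalues i) ≤ Real.log (1 + specNorm (A - Ahat)) :=
    Real.log_le_log (hμpos i) (hup i)
  calc (Real.log (hMH.eigenvalues i)) ^ 2
      = Real.log (hMH.eigenvalues i) * Real.log (hMH.eigenvalues i) := sq _
    _ ≤ Real.log (hMH.eigenvalues i) * Real.log (1 + specNorm (A - Ahat)) :=
        mul_le_mul_of_nonneg_left hl1 hl0
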